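/- Fix p ≥ 1, r ≥ 2, k₁,…,k_r ∈ ℕ₀ and define f(k) = k_r + pk and ρ̄(k) = k₁⋯k_{r−1} f(k). For any sequence (p_n) with 0 ≤ p_n ≤ r−1, define q_n = −1 − Σ_{m=1}^{n} p_m r^{m−1}. Then for the n-th Toeplitz approximant x⁽ⁿ⁾ = α⁽¹⁾ ▶ ⋯ ▶ α⁽ⁿ⁾ with α⁽ᵐ⁾ = S^{p_m}((f^{m−1}(k₁⋯k_{r−1}) ?)^ℤ), the approximant x⁽ⁿ⁾ is rⁿ-periodic and its set of undetermined positions equals rⁿℤ + q_n. -/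

import Mathlib

/-- `z` is the result of filling the undetermined positions (value `none`) of `x`
with the letters of `y` in order: `e` enumerates the undetermined positions of `x`
in increasing order, with `e 0` the first undetermined position ≥ 0. -/
def IsFilling (x y z : ℤ → Option ℕ) : Prop :=
  ∃ e : ℤ → ℤ, StrictMono e ∧ (∀ i, x i = none ↔ ∃ k, e k = i) ∧
    0 ≤ e 0 ∧ e (-1) < 0 ∧
    (∀ k, z (e k) = y k) ∧ (∀ i, x i ≠ none → z i = x i)

private lemma period_nsmul {x : ℤ → Option ℕ} {T : ℤ} (h : ∀ i, x (i + T) = x i) :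
    ∀ (j : ℕ) (i : ℤ), x (i + T * j) = x i := by
  intro j
  induction j with
  | zero => intro i; simp
  | succ j ih =>
      intro i
      push_cast
      rw [show i + T * ((j : ℤ) + 1) = (i + T * j) + T by ring, h]
      exact_mod_cast ih i

/-- The n-th Toeplitz approximant x⁽ⁿ⁾ = α⁽¹⁾ ▶ ⋯ ▶ α⁽ⁿ⁾, where
α⁽ᵐ⁾ = S^{p_m}((f^{m−1}(k₁⋯k_{r−1}) ?)^ℤ), is rⁿ-periodic and its set of
undetermined positions is rⁿℤ + q_n with q_n = −1 − Σ_{m=1}^{n} p_m r^{m−1}. -/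
theorem stmt18 (p r : ℕ) (hr : 2 ≤ r)
    (ks : List ℕ) (hks : ks.length = r - 1)
    (kr : ℕ) (f : ℕ → ℕ) (hf : ∀ k, f k = kr + p * k)
    (pseq : ℕ → ℕ) (hpseq : ∀ m, pseq m ≤ r - 1)
    (α : ℕ → ℤ → Option ℕ)
    (hα : ∀ (m : ℕ) (i : ℤ), 1 ≤ m →
      α m i = if (i + (pseq m : ℤ)) % (r : ℤ) = (r : ℤ) - 1 then none
        else some (f^[m - 1] (ks.getD ((i + (pseq m : ℤ)) % (r : ℤ)).toNat 0)))
    (q : ℕ → ℤ)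
    (hq : ∀ n, q n = -1 - ∑ j ∈ Finset.range n, (pseq (j + 1) : ℤ) * (r : ℤ) ^ j)
    (x : ℕ → ℤ → Option ℕ)
    (hx1 : x 1 = α 1)
    (hxs : ∀ m, 1 ≤ m → IsFilling (x m) (α (m + 1)) (x (m + 1))) :
    ∀ n, 1 ≤ n →
      (∀ i : ℤ, x n (i + (r : ℤ) ^ n) = x n i) ∧
      (∀ i : ℤ, x n i = none ↔ (r : ℤ) ^ n ∣ (i - q n)) := by
  have hrZ : (2 : ℤ) ≤ (r : ℤ) := by exact_mod_cast hr
  -- key modular arithmetic lemma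
  have hmod : ∀ a : ℤ, a % (r : ℤ) = (r : ℤ) - 1 ↔ (r : ℤ) ∣ a + 1 := by
    intro a
    constructor
    · intro h
      have hd := Int.mul_ediv_add_emod a (r : ℤ)
      refine ⟨a / r + 1, ?_⟩
      rw [mul_add, mul_one]
      linarith
    · rintro ⟨d, hd⟩
      have h1 : a = (r : ℤ) - 1 + (r : ℤ) * (d - 1) := by linarith
      rw [h1, Int.add_mul_emod_self_left]
      exact Int.emod_eq_of_lt (by linarith) (by linarith)
  -- bounds on q
  have hqub : ∀ n : ℕ, q n ≤ -1 := by
    intro n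
    rw [hq]
    have h : (0 : ℤ) ≤ ∑ j ∈ Finset.range n, (pseq (j + 1) : ℤ) * (r : ℤ) ^ j :=
      Finset.sum_nonneg fun j _ => by positivity
    linarith
  have hqlb : ∀ n : ℕ, -((r : ℤ) ^ n) ≤ q n := by
    intro n
    rw [hq]
    have h : ∑ j ∈ Finset.range n, (pseq (j + 1) : ℤ) * (r : ℤ) ^ j
        ≤ ∑ j ∈ Finset.range n, ((r : ℤ) - 1) * (r : ℤ) ^ j := by
      refine Finset.sum_le_sum fun j _ => ?_
      have h1 : (pseq (j + 1) : ℤ) ≤ (r : ℤ) - 1 := by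
        have := hpseq (j + 1); omega
      have h2 : (0 : ℤ) ≤ (r : ℤ) ^ j := by positivity
      exact mul_le_mul_of_nonneg_right h1 h2
    have h2 : ∑ j ∈ Finset.range n, ((r : ℤ) - 1) * (r : ℤ) ^ j = (r : ℤ) ^ n - 1 := by
      rw [← Finset.mul_sum, mul_comm, geom_sum_mul]
    linarith
  intro n hn
  induction n, hn using Nat.le_induction with
  | base =>
      constructor
      · intro i
        rw [hx1, hα 1 (i + (r : ℤ) ^ 1) le_rfl, hα 1 i le_rfl,
          show (i + (r : ℤ) ^ 1) + (pseq 1 : ℤ) = (i + (pseq 1 : ℤ)) + (r : ℤ) * 1 by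
            rw [pow_one]; ring,
          Int.add_mul_emod_self_left]
      · intro i
        rw [hx1, hα 1 i le_rfl]
        have hq1 : i - q 1 = (i + (pseq 1 : ℤ)) + 1 := by
          rw [hq 1, Finset.sum_range_one, pow_zero, mul_one]; ring
        rw [pow_one, hq1, ← hmod (i + (pseq 1 : ℤ))]
        split_ifs with h
        · simp [h]
        · simp [h]
  | succ n hn ih =>
      obtain ⟨hP, hN⟩ := ih
      obtain ⟨e, hmono, hiff, he0, hem1, hfill, hkeep⟩ := hxs n hn
      have hRpos : (0 : ℤ) < (r : ℤ) ^ n := by positivity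
      have hrange : ∀ i : ℤ, (∃ k, e k = i) ↔ (r : ℤ) ^ n ∣ i - q n := by
        intro i
        constructor
        · intro hk; exact (hN i).mp ((hiff i).mpr hk)
        · intro h; exact (hiff i).mp ((hN i).mpr h)
      have hstep : ∀ k : ℤ, e (k + 1) = e k + (r : ℤ) ^ n := by
        intro k
        have hek : (r : ℤ) ^ n ∣ e k - q n := (hrange (e k)).mp ⟨k, rfl⟩
        obtain ⟨j, hj⟩ := (hrange (e k + (r : ℤ) ^ n)).mpr (by
          rw [show e k + (r : ℤ) ^ n - q n = (e k - q n) + (r : ℤ) ^ n by ring]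
          exact dvd_add hek (dvd_refl _))
        have hkj : k < j := hmono.lt_iff_lt.mp (by rw [hj]; linarith)
        have h1 : e (k + 1) ≤ e j := hmono.monotone (by omega)
        have h2 : e k < e (k + 1) := hmono (lt_add_one k)
        have h3 : (r : ℤ) ^ n ∣ e (k + 1) - e k := by
          have := dvd_sub ((hrange (e (k + 1))).mp ⟨k + 1, rfl⟩) hek
          rwa [show e (k + 1) - q n - (e k - q n) = e (k + 1) - e k by ring] at this
        have h4 : (r : ℤ) ^ n ≤ e (k + 1) - e k := Int.le_of_dvd (by linarith) h3
        linarith [hj ▸ h1]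
      have hform : ∀ k : ℤ, e k = e 0 + (r : ℤ) ^ n * k := by
        intro k
        induction k using Int.induction_on with
        | zero => simp
        | succ m ihm => rw [hstep, ihm]; push_cast; ring
        | pred m ihm =>
            have h := hstep (-(m : ℤ) - 1)
            rw [show (-(m : ℤ) - 1) + 1 = -(m : ℤ) by ring] at h
            have : e (-(m : ℤ) - 1) = e (-(m : ℤ)) - (r : ℤ) ^ n := by linarith
            rw [this, ihm]
            ring
      have he0v : e 0 = q n + (r : ℤ) ^ n := by
        obtain ⟨m, hm⟩ := (hrange (e 0)).mp ⟨0, rfl⟩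
        have hb1 := hqub n
        have hb2 := hqlb n
        have h5 : e (-1) = e 0 - (r : ℤ) ^ n := by rw [hform]; ring
        have hmpos : 0 < m := by
          by_contra h
          push_neg at h
          nlinarith
        have hmlt : m < 2 := by
          by_contra h
          push_neg at h
          nlinarith
        have : m = 1 := by omega
        rw [this, mul_one] at hm
        linarith
      have halpha : ∀ k : ℤ, (α (n + 1) k = none ↔ (r : ℤ) ∣ k + (pseq (n + 1) : ℤ) + 1) := by
        intro k
        rw [hα (n + 1) k (by omega)]
        by_cases h : (k + (pseq (n + 1) : ℤ)) % r = (r : ℤ) - 1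
        · rw [if_pos h]
          simpa using (hmod _).mp h
        · rw [if_neg h]
          exact iff_of_false (by simp) (fun hd => h ((hmod _).mpr hd))
      have hαper : ∀ k : ℤ, α (n + 1) (k + r) = α (n + 1) k := by
        intro k
        rw [hα (n + 1) _ (by omega), hα (n + 1) _ (by omega),
          show k + (r : ℤ) + (pseq (n + 1) : ℤ) = (k + (pseq (n + 1) : ℤ)) + (r : ℤ) * 1 by ring,
          Int.add_mul_emod_self_left]
      have hq' : q (n + 1) = q n - (pseq (n + 1) : ℤ) * (r : ℤ) ^ n := by
        rw [hq, hq, Finset.sum_range_succ]; ring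
      have hpow : (r : ℤ) ^ (n + 1) = (r : ℤ) ^ n * r := pow_succ _ _
      constructor
      · intro i
        by_cases hxn : x n i = none
        · obtain ⟨k, hk⟩ := (hiff i).mp hxn
          have h1 : e (k + r) = i + (r : ℤ) ^ (n + 1) := by
            rw [hform (k + r), ← hk, hform k, hpow]; ring
          calc x (n + 1) (i + (r : ℤ) ^ (n + 1)) = x (n + 1) (e (k + r)) := by rw [h1]
            _ = α (n + 1) (k + r) := hfill _
            _ = α (n + 1) k := hαper k
            _ = x (n + 1) (e k) := (hfill k).symm
            _ = x (n + 1) i := by rw [hk]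
        · have h2 : x n (i + (r : ℤ) ^ (n + 1)) ≠ none := by
            intro hc
            apply hxn
            apply (hN i).mpr
            have hd1 := (hN _).mp hc
            have hd2 : (r : ℤ) ^ n ∣ (r : ℤ) ^ (n + 1) := ⟨r, hpow⟩
            have := dvd_sub hd1 hd2
            rwa [show i + (r : ℤ) ^ (n + 1) - q n - (r : ℤ) ^ (n + 1) = i - q n by ring] at this
          rw [hkeep _ h2, hkeep _ hxn, hpow]
          exact period_nsmul hP r i
      · intro i
        by_cases hxn : x n i = none
        · obtain ⟨k, hk⟩ := (hiff i).mp hxn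
          have hzi : x (n + 1) i = α (n + 1) k := by rw [← hk]; exact hfill k
          rw [hzi, halpha]
          have hi : i = q n + (r : ℤ) ^ n * (k + 1) := by
            rw [← hk, hform, he0v]; ring
          have hiq : i - q (n + 1) = (r : ℤ) ^ n * (k + (pseq (n + 1) : ℤ) + 1) := by
            rw [hi, hq']; ring
          rw [hiq, hpow]
          exact (mul_dvd_mul_iff_left (a := (r : ℤ) ^ n) (by positivity)).symm
        · have hzi : x (n + 1) i = x n i := hkeep i hxn
          apply iff_of_false
          · rw [hzi]; exact hxn
          · intro hd
            apply hxn
            apply (hN i).mpr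
            have hd1 : (r : ℤ) ^ n ∣ i - q (n + 1) := dvd_trans ⟨r, hpow⟩ hd
            have hd2 : (r : ℤ) ^ n ∣ q (n + 1) - q n := ⟨-(pseq (n + 1) : ℤ), by rw [hq']; ring⟩
            have := dvd_add hd1 hd2
            rwa [show i - q (n + 1) + (q (n + 1) - q n) = i - q n by ring] at this
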